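/- Let S be a finite set with {ℓ_i : i ∈ S} distinct odd primes, r = Π ℓ_i, G_S = Gal(ℚ(μ_r)/ℚ) ≅ Π_i (ℤ/ℓ_iℤ)^×, with σ_i generating the inertia subgroup G_i, and let M divide ℓ_i − 1 for all i. For T ⊆ S set D_T = Π_{i∈T} D_i with D_i = Σ_{k=0}^{ℓ_i−2} k σ_i^k, acting on the universal ordinary distribution U_r. Then the element D_T·[Σ_{i∈T} 1/ℓ_i] in U_r/MU_r is fixed by G_S, i.e. lies in H^0(G_S, U_r/MU_r). -/

import Mathlib

noncomputable section

open MonoidAlgebra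

variable (S : Type) [Fintype S] [DecidableEq S]

/-- The level, `r = ∏_{i ∈ S} ℓ_i`. -/
def lev (ℓ : S → ℕ) : ℕ := ∏ i, ℓ i

/-- The free abelian group on `(1/r)ℤ/ℤ ≅ ℤ/rℤ`, as a module over the group ring of
the multiplicative monoid `ℤ/rℤ`; the Galois group `(ℤ/rℤ)ˣ` acts by multiplication. -/
abbrev AMod (ℓ : S → ℕ) : Type := MonoidAlgebra ℤ (ZMod (lev S ℓ))

/-- The distribution relations of level `r`: `[a] - ∑_{ℓ_i b = a} [b]` for `i ∈ S`. -/
def distribRelR (ℓ : S → ℕ) : AddSubgroup (AMod S ℓ) :=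
  AddSubgroup.closure
    {z | ∃ (i : S) (y : ZMod (lev S ℓ)),
      z = MonoidAlgebra.single ((ℓ i : ZMod (lev S ℓ)) * y) 1 -
        ∑ j ∈ Finset.range (ℓ i),
          MonoidAlgebra.single
            (y + (j : ZMod (lev S ℓ)) * ((lev S ℓ / ℓ i : ℕ) : ZMod (lev S ℓ))) 1}

/-- The subgroup of `𝒜` whose quotient is `U_r/MU_r`: relations together with
`M`-multiples. -/
def relModM (ℓ : S → ℕ) (M : ℕ) : AddSubgroup (AMod S ℓ) :=
  distribRelR S ℓ ⊔ (DistribMulAction.toAddMonoidHom (AMod S ℓ) ((M : ℤ))).range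

/-- `U_r/MU_r`. -/
def UModM (ℓ : S → ℕ) (M : ℕ) : Type := AMod S ℓ ⧸ relModM S ℓ M

instance (ℓ : S → ℕ) (M : ℕ) : AddCommGroup (UModM S ℓ M) := by
  unfold UModM; infer_instance

/-- The Kolyvagin derivative `D_T = ∏_{i ∈ T} ∑_{k=0}^{ℓ_i - 2} k σ_i^k` applied to
`[∑_{i ∈ T} 1/ℓ_i]`, as an element of the group ring model of `U_r`. -/
def DTelt (ℓ : S → ℕ) (σ : S → (ZMod (lev S ℓ))ˣ) (T : Finset S) : AMod S ℓ :=
  (∏ i ∈ T, ∑ k ∈ Finset.range (ℓ i - 1),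
      MonoidAlgebra.single (((σ i : ZMod (lev S ℓ))) ^ k) (k : ℤ)) *
    MonoidAlgebra.single (∑ i ∈ T, ((lev S ℓ / ℓ i : ℕ) : ZMod (lev S ℓ))) 1


set_option linter.unusedSectionVars false
set_option linter.unusedVariables false

namespace Stmt14Aux

/-! ### Generic helper lemmas -/

theorem coprime_of_modEq {a b n : ℕ} (h : a ≡ b [MOD n]) (hb : Nat.Coprime b n) :
    Nat.Coprime a n := by
  have h' : a % n = b % n := h
  have h1 : Nat.gcd n a = Nat.gcd n b := by
    rw [Nat.gcd_rec n a, Nat.gcd_rec n b, h']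
  unfold Nat.Coprime at *
  rw [Nat.gcd_comm, h1, Nat.gcd_comm]
  exact hb

theorem dvd_val_of_cast_eq_zero {n d : ℕ} [NeZero n] [NeZero d] (hd : d ∣ n) {z : ZMod n}
    (h : ZMod.castHom hd (ZMod d) z = 0) : d ∣ z.val := by
  have h2 : ((z.val : ℕ) : ZMod d) = 0 := by
    rw [ZMod.natCast_val]
    rw [ZMod.castHom_apply] at h
    exact h
  exact (ZMod.natCast_eq_zero_iff _ _).mp h2

theorem mul_eq_of_cast_eq {n d : ℕ} [NeZero n] [NeZero d] (hd : d ∣ n) {m x y : ZMod n}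
    (hm : (d : ZMod n) * m = 0)
    (hxy : ZMod.castHom hd (ZMod d) x = ZMod.castHom hd (ZMod d) y) : x * m = y * m := by
  have h0 : ZMod.castHom hd (ZMod d) (x - y) = 0 := by rw [map_sub, hxy, sub_self]
  obtain ⟨c, hc⟩ := dvd_val_of_cast_eq_zero hd h0
  have hxy2 : x - y = ((d * c : ℕ) : ZMod n) := by
    rw [← hc, ZMod.natCast_val, ZMod.cast_id]
  have hz : (x - y) * m = 0 := by
    rw [hxy2]
    push_cast
    calc (d : ZMod n) * (c : ZMod n) * m = (c : ZMod n) * ((d : ZMod n) * m) := by ring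
    _ = 0 := by rw [hm, mul_zero]
  have h3 : x * m - y * m = 0 := by rw [← sub_mul, hz]
  exact sub_eq_zero.mp h3

theorem sum_range_cast {n : ℕ} [NeZero n] {β : Type*} [AddCommMonoid β] (f : ZMod n → β) :
    ∑ c ∈ Finset.range n, f (c : ZMod n) = ∑ d : ZMod n, f d := by
  refine Finset.sum_nbij' (fun c => ((c : ℕ) : ZMod n)) (fun d => d.val) ?_ ?_ ?_ ?_ ?_
  · intro a _; exact Finset.mem_univ _
  · intro d _; exact Finset.mem_range.mpr (ZMod.val_lt d)
  · intro a ha; exact ZMod.val_cast_of_lt (Finset.mem_range.mp ha)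
  · intro d _; show ((d.val : ℕ) : ZMod n) = d; rw [ZMod.natCast_val, ZMod.cast_id]
  · intro a _; rfl

theorem sum_units_mul {n : ℕ} [NeZero n] {β : Type*} [AddCommMonoid β] {x : ZMod n}
    (hx : IsUnit x) (f : ZMod n → β) : ∑ d : ZMod n, f (x * d) = ∑ d : ZMod n, f d := by
  obtain ⟨u, rfl⟩ := hx
  refine Fintype.sum_bijective (fun d => (u : ZMod n) * d) ?_ _ _ (fun d => rfl)
  refine Function.bijective_iff_has_inverse.mpr ⟨fun d => ((u⁻¹ : (ZMod n)ˣ) : ZMod n) * d, fun d => by simp, fun d => by simp⟩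

theorem key_identity {G : Type*} [CommMonoid G] {g : G} {n : ℕ} (hg : g ^ n = 1) :
    (MonoidAlgebra.single g (1:ℤ) - 1) *
        (∑ k ∈ Finset.range n, MonoidAlgebra.single (g ^ k) (k : ℤ)) =
      MonoidAlgebra.single (1 : G) (n : ℤ) -
        ∑ k ∈ Finset.range n, MonoidAlgebra.single (g ^ k) (1:ℤ) := by
  have hmul : ∀ (k : ℕ) (c : ℤ), MonoidAlgebra.single g (1:ℤ) * MonoidAlgebra.single (g ^ k) c
      = MonoidAlgebra.single (g ^ (k+1)) c := by
    intro k c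
    rw [MonoidAlgebra.single_mul_single, one_mul, ← pow_succ']
  have hN : ∑ k ∈ Finset.range n, MonoidAlgebra.single (g ^ (k+1)) (1:ℤ)
      = ∑ k ∈ Finset.range n, MonoidAlgebra.single (g ^ k) (1:ℤ) := by
    have h1 := Finset.sum_range_succ' (fun m => MonoidAlgebra.single (g ^ m) (1:ℤ)) n
    have h2 := Finset.sum_range_succ (fun m => MonoidAlgebra.single (g ^ m) (1:ℤ)) n
    have h3 : MonoidAlgebra.single (g ^ n) (1:ℤ) = MonoidAlgebra.single (g ^ 0) (1:ℤ) := by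
      rw [hg, pow_zero]
    have h4 := h1.symm.trans h2
    rw [h3] at h4
    exact add_right_cancel h4
  have hD : ∑ k ∈ Finset.range n, MonoidAlgebra.single (g ^ (k+1)) ((k+1 : ℕ) : ℤ)
      = (∑ k ∈ Finset.range n, MonoidAlgebra.single (g ^ k) (k : ℤ))
          + MonoidAlgebra.single (1 : G) (n : ℤ) := by
    have h1 := Finset.sum_range_succ' (fun m => MonoidAlgebra.single (g ^ m) (m : ℤ)) n
    have h2 := Finset.sum_range_succ (fun m => MonoidAlgebra.single (g ^ m) (m : ℤ)) n
    have h0 : MonoidAlgebra.single (g ^ 0) ((0:ℕ) : ℤ) = 0 := by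
      simp
    have h4 := h1.symm.trans h2
    rw [h0, add_zero] at h4
    rw [h4, hg]
  have hgD : MonoidAlgebra.single g (1:ℤ) *
      (∑ k ∈ Finset.range n, MonoidAlgebra.single (g ^ k) (k : ℤ))
      = (∑ k ∈ Finset.range n, MonoidAlgebra.single (g ^ k) (k : ℤ))
          + MonoidAlgebra.single (1 : G) (n : ℤ)
          - ∑ k ∈ Finset.range n, MonoidAlgebra.single (g ^ k) (1:ℤ) := by
    rw [Finset.mul_sum]
    have e1 : ∀ k ∈ Finset.range n,
        MonoidAlgebra.single g (1:ℤ) * MonoidAlgebra.single (g ^ k) (k : ℤ)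
        = MonoidAlgebra.single (g ^ (k+1)) ((k+1 : ℕ) : ℤ)
            - MonoidAlgebra.single (g ^ (k+1)) (1:ℤ) := by
      intro k _
      rw [hmul]
      rw [← MonoidAlgebra.single_sub]
      congr 1
      push_cast
      ring
    rw [Finset.sum_congr rfl e1, Finset.sum_sub_distrib, hD, hN]
  rw [sub_mul, one_mul, hgD]
  abel

/-! ### Arithmetic of the level -/

theorem lev_pos (ℓ : S → ℕ) (hp : ∀ i, (ℓ i).Prime) : 0 < lev S ℓ :=
  Finset.prod_pos fun i _ => (hp i).pos

theorem dvd_lev (ℓ : S → ℕ) (i : S) : ℓ i ∣ lev S ℓ :=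
  Finset.dvd_prod_of_mem ℓ (Finset.mem_univ i)

theorem div_eq_prod_erase (ℓ : S → ℕ) (hp : ∀ i, (ℓ i).Prime) (i : S) :
    lev S ℓ / ℓ i = ∏ k ∈ Finset.univ.erase i, ℓ k := by
  have h := Finset.prod_erase_mul Finset.univ ℓ (Finset.mem_univ i)
  rw [lev, ← h]
  exact Nat.mul_div_cancel _ (hp i).pos

theorem dvd_div (ℓ : S → ℕ) (hp : ∀ i, (ℓ i).Prime) {i j : S} (h : i ≠ j) :
    ℓ i ∣ lev S ℓ / ℓ j := by
  rw [div_eq_prod_erase S ℓ hp j]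
  exact Finset.dvd_prod_of_mem ℓ (Finset.mem_erase.mpr ⟨h, Finset.mem_univ i⟩)

theorem coprime_div (ℓ : S → ℕ) (hp : ∀ i, (ℓ i).Prime) (hinj : Function.Injective ℓ)
    (i : S) : Nat.Coprime (ℓ i) (lev S ℓ / ℓ i) := by
  rw [div_eq_prod_erase S ℓ hp i, (hp i).coprime_iff_not_dvd]
  intro hdvd
  obtain ⟨k, hk, hdk⟩ := (Nat.Prime.prime (hp i)).exists_mem_finset_dvd hdvd
  have : ℓ i = ℓ k := (Nat.prime_dvd_prime_iff_eq (hp i) (hp k)).mp hdk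
  exact (Finset.mem_erase.mp hk).1 (hinj this).symm

theorem div_pos (ℓ : S → ℕ) (hp : ∀ i, (ℓ i).Prime) (i : S) : 0 < lev S ℓ / ℓ i :=
  Nat.pos_of_dvd_of_pos (Nat.div_dvd_of_dvd (dvd_lev S ℓ i)) (lev_pos S ℓ hp)

/-! ### ZMod facts -/

theorem ell_mul_mI (ℓ : S → ℕ) (hp : ∀ i, (ℓ i).Prime) (i : S) :
    (ℓ i : ZMod (lev S ℓ)) * ((lev S ℓ / ℓ i : ℕ) : ZMod (lev S ℓ)) = 0 := by
  rw [← Nat.cast_mul, Nat.mul_div_cancel' (dvd_lev S ℓ i), ZMod.natCast_self]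

theorem mI_mul_mI (ℓ : S → ℕ) (hp : ∀ i, (ℓ i).Prime) {i j : S} (h : i ≠ j) :
    ((lev S ℓ / ℓ i : ℕ) : ZMod (lev S ℓ)) * ((lev S ℓ / ℓ j : ℕ) : ZMod (lev S ℓ)) = 0 := by
  haveI : NeZero (lev S ℓ) := ⟨(lev_pos S ℓ hp).ne'⟩
  rw [← Nat.cast_mul]
  rw [ZMod.natCast_eq_zero_iff]
  obtain ⟨t, ht⟩ := dvd_div S ℓ hp h
  have heq : lev S ℓ / ℓ i * (lev S ℓ / ℓ j) = lev S ℓ * t := by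
    calc lev S ℓ / ℓ i * (lev S ℓ / ℓ j) = lev S ℓ / ℓ i * (ℓ i * t) := by rw [← ht]
    _ = (lev S ℓ / ℓ i * ℓ i) * t := by ring
    _ = lev S ℓ * t := by rw [Nat.div_mul_cancel (dvd_lev S ℓ i)]
  rw [heq]
  exact dvd_mul_right _ _

theorem cast_one_mul_mI (ℓ : S → ℕ) (hp : ∀ i, (ℓ i).Prime) {j : S} {x : ZMod (lev S ℓ)}
    (hx : ZMod.castHom (Nat.div_dvd_of_dvd (dvd_lev S ℓ j)) (ZMod (lev S ℓ / ℓ j)) x = 1)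
    {i : S} (hij : i ≠ j) :
    x * ((lev S ℓ / ℓ i : ℕ) : ZMod (lev S ℓ)) = ((lev S ℓ / ℓ i : ℕ) : ZMod (lev S ℓ)) := by
  haveI : NeZero (lev S ℓ) := ⟨(lev_pos S ℓ hp).ne'⟩
  haveI : NeZero (lev S ℓ / ℓ j) := ⟨(div_pos S ℓ hp j).ne'⟩
  have := mul_eq_of_cast_eq (n := lev S ℓ) (d := lev S ℓ / ℓ j)
      (Nat.div_dvd_of_dvd (dvd_lev S ℓ j))
      (m := ((lev S ℓ / ℓ i : ℕ) : ZMod (lev S ℓ))) (x := x) (y := 1)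
      (mI_mul_mI S ℓ hp (Ne.symm hij)) (by rw [hx, map_one])
  rwa [one_mul] at this

theorem mul_mI_val (ℓ : S → ℕ) (hp : ∀ i, (ℓ i).Prime) (j : S) (z : ZMod (lev S ℓ)) :
    z * ((lev S ℓ / ℓ j : ℕ) : ZMod (lev S ℓ))
      = (((ZMod.castHom (dvd_lev S ℓ j) (ZMod (ℓ j)) z).val : ℕ) : ZMod (lev S ℓ))
          * ((lev S ℓ / ℓ j : ℕ) : ZMod (lev S ℓ)) := by
  haveI : NeZero (lev S ℓ) := ⟨(lev_pos S ℓ hp).ne'⟩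
  haveI : NeZero (ℓ j) := ⟨(hp j).pos.ne'⟩
  refine mul_eq_of_cast_eq (dvd_lev S ℓ j) (ell_mul_mI S ℓ hp j) ?_
  rw [map_natCast, ZMod.natCast_val, ZMod.cast_id, ZMod.castHom_apply]

theorem eq_one_of_two_casts (ℓ : S → ℕ) (hp : ∀ i, (ℓ i).Prime)
    (hinj : Function.Injective ℓ) (j : S) {x : ZMod (lev S ℓ)}
    (h1 : ZMod.castHom (dvd_lev S ℓ j) (ZMod (ℓ j)) x = 1)
    (h2 : ZMod.castHom (Nat.div_dvd_of_dvd (dvd_lev S ℓ j)) (ZMod (lev S ℓ / ℓ j)) x = 1) :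
    x = 1 := by
  haveI : NeZero (lev S ℓ) := ⟨(lev_pos S ℓ hp).ne'⟩
  haveI : NeZero (ℓ j) := ⟨(hp j).pos.ne'⟩
  haveI : NeZero (lev S ℓ / ℓ j) := ⟨(div_pos S ℓ hp j).ne'⟩
  have c1 : ZMod.castHom (dvd_lev S ℓ j) (ZMod (ℓ j)) (x - 1) = 0 := by
    rw [map_sub, map_one, h1, sub_self]
  have c2 : ZMod.castHom (Nat.div_dvd_of_dvd (dvd_lev S ℓ j)) (ZMod (lev S ℓ / ℓ j)) (x - 1) = 0 := by
    rw [map_sub, map_one, h2, sub_self]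
  have d1 := dvd_val_of_cast_eq_zero (dvd_lev S ℓ j) c1
  have d2 := dvd_val_of_cast_eq_zero (Nat.div_dvd_of_dvd (dvd_lev S ℓ j)) c2
  have d3 : lev S ℓ ∣ (x - 1).val := by
    have := (coprime_div S ℓ hp hinj j).mul_dvd_of_dvd_of_dvd d1 d2
    rwa [Nat.mul_div_cancel' (dvd_lev S ℓ j)] at this
  have d4 : (x - 1).val = 0 := Nat.eq_zero_of_dvd_of_lt d3 (ZMod.val_lt _)
  have : x - 1 = 0 := (ZMod.val_eq_zero _).mp d4
  exact sub_eq_zero.mp this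

theorem eq_one_of_all_casts (ℓ : S → ℕ) (hp : ∀ i, (ℓ i).Prime)
    (hinj : Function.Injective ℓ) {x : ZMod (lev S ℓ)}
    (h : ∀ i, ZMod.castHom (dvd_lev S ℓ i) (ZMod (ℓ i)) x = 1) : x = 1 := by
  haveI : NeZero (lev S ℓ) := ⟨(lev_pos S ℓ hp).ne'⟩
  have d1 : ∀ i, ℓ i ∣ (x - 1).val := by
    intro i
    haveI : NeZero (ℓ i) := ⟨(hp i).pos.ne'⟩
    refine dvd_val_of_cast_eq_zero (dvd_lev S ℓ i) ?_
    rw [map_sub, map_one, h i, sub_self]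
  have himg : (∏ i, ℓ i) = ∏ p ∈ Finset.univ.image ℓ, p :=
    (Finset.prod_image (f := id) (fun a _ b _ hab => hinj hab)).symm
  have d3 : lev S ℓ ∣ (x - 1).val := by
    refine dvd_trans (dvd_of_eq ?_) (Finset.prod_primes_dvd (s := Finset.univ.image ℓ) _ ?_ ?_)
    · exact himg
    · intro p hyp
      obtain ⟨i, _, rfl⟩ := Finset.mem_image.mp hyp
      exact (hp i).prime
    · intro p hyp
      obtain ⟨i, _, rfl⟩ := Finset.mem_image.mp hyp
      exact d1 i
  have d4 : (x - 1).val = 0 := Nat.eq_zero_of_dvd_of_lt d3 (ZMod.val_lt _)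
  have : x - 1 = 0 := (ZMod.val_eq_zero _).mp d4
  exact sub_eq_zero.mp this

/-! ### Stability of relations under the Galois action -/

theorem sum_perm (ℓ : S → ℕ) (hp : ∀ i, (ℓ i).Prime) (i : S) {x : ZMod (lev S ℓ)}
    (hx : IsUnit (ZMod.castHom (dvd_lev S ℓ i) (ZMod (ℓ i)) x)) (y : ZMod (lev S ℓ)) :
    ∑ c ∈ Finset.range (ℓ i),
        MonoidAlgebra.single
          (y + x * ((c : ZMod (lev S ℓ)) * ((lev S ℓ / ℓ i : ℕ) : ZMod (lev S ℓ)))) (1:ℤ)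
      = ∑ c ∈ Finset.range (ℓ i),
          MonoidAlgebra.single
            (y + (c : ZMod (lev S ℓ)) * ((lev S ℓ / ℓ i : ℕ) : ZMod (lev S ℓ))) (1:ℤ) := by
  haveI : NeZero (lev S ℓ) := ⟨(lev_pos S ℓ hp).ne'⟩
  haveI : NeZero (ℓ i) := ⟨(hp i).pos.ne'⟩
  let χ := ZMod.castHom (dvd_lev S ℓ i) (ZMod (ℓ i))
  let G : ZMod (ℓ i) → AMod S ℓ := fun d =>
    MonoidAlgebra.single
      (y + ((d.val : ℕ) : ZMod (lev S ℓ)) * ((lev S ℓ / ℓ i : ℕ) : ZMod (lev S ℓ))) (1:ℤ)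
  calc ∑ c ∈ Finset.range (ℓ i),
        MonoidAlgebra.single
          (y + x * ((c : ZMod (lev S ℓ)) * ((lev S ℓ / ℓ i : ℕ) : ZMod (lev S ℓ)))) (1:ℤ)
      = ∑ c ∈ Finset.range (ℓ i), G (χ x * ((c : ℕ) : ZMod (ℓ i))) := by
        refine Finset.sum_congr rfl fun c _ => ?_
        show _ = MonoidAlgebra.single
          (y + (((χ x * ((c : ℕ) : ZMod (ℓ i))).val : ℕ) : ZMod (lev S ℓ))
            * ((lev S ℓ / ℓ i : ℕ) : ZMod (lev S ℓ))) (1:ℤ)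
        congr 2
        rw [← mul_assoc, mul_mI_val S ℓ hp i (x * (c : ZMod (lev S ℓ)))]
        congr 2
        rw [map_mul, map_natCast]
    _ = ∑ d : ZMod (ℓ i), G (χ x * d) := sum_range_cast (fun d => G (χ x * d))
    _ = ∑ d : ZMod (ℓ i), G d := sum_units_mul (hx) G
    _ = ∑ c ∈ Finset.range (ℓ i), G ((c : ℕ) : ZMod (ℓ i)) := (sum_range_cast G).symm
    _ = ∑ c ∈ Finset.range (ℓ i),
          MonoidAlgebra.single
            (y + (c : ZMod (lev S ℓ)) * ((lev S ℓ / ℓ i : ℕ) : ZMod (lev S ℓ))) (1:ℤ) := by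
        refine Finset.sum_congr rfl fun c hc => ?_
        show MonoidAlgebra.single
          (y + ((((c : ℕ) : ZMod (ℓ i)).val : ℕ) : ZMod (lev S ℓ))
            * ((lev S ℓ / ℓ i : ℕ) : ZMod (lev S ℓ))) (1:ℤ) = _
        rw [ZMod.val_cast_of_lt (Finset.mem_range.mp hc)]

theorem single_unit_mul_mem_rel (ℓ : S → ℕ) (hp : ∀ i, (ℓ i).Prime)
    {x : ZMod (lev S ℓ)} (hx : IsUnit x) :
    ∀ z ∈ distribRelR S ℓ, MonoidAlgebra.single x (1:ℤ) * z ∈ distribRelR S ℓ := by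
  intro z hz
  refine AddSubgroup.closure_induction ?_ ?_ ?_ ?_ hz
  · rintro w ⟨i, y, rfl⟩
    rw [mul_sub, Finset.mul_sum]
    have h1 : MonoidAlgebra.single x (1:ℤ)
          * MonoidAlgebra.single ((ℓ i : ZMod (lev S ℓ)) * y) (1:ℤ)
        = MonoidAlgebra.single ((ℓ i : ZMod (lev S ℓ)) * (x * y)) (1:ℤ) := by
      rw [MonoidAlgebra.single_mul_single, one_mul, mul_left_comm]
    have h2 : ∀ c ∈ Finset.range (ℓ i),
        MonoidAlgebra.single x (1:ℤ) * MonoidAlgebra.single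
            (y + (c : ZMod (lev S ℓ)) * ((lev S ℓ / ℓ i : ℕ) : ZMod (lev S ℓ))) (1:ℤ)
          = MonoidAlgebra.single
            ((x * y) + x * ((c : ZMod (lev S ℓ)) * ((lev S ℓ / ℓ i : ℕ) : ZMod (lev S ℓ)))) (1:ℤ) := by
      intro c _
      rw [MonoidAlgebra.single_mul_single, one_mul, mul_add]
    rw [h1, Finset.sum_congr rfl h2, sum_perm S ℓ hp i (hx.map _) (x * y)]
    exact AddSubgroup.subset_closure ⟨i, x * y, rfl⟩
  · rw [mul_zero]; exact zero_mem _
  · intro a b _ _ ha hb; rw [mul_add]; exact add_mem ha hb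
  · intro a _ ha; rw [mul_neg]; exact neg_mem ha

theorem single_unit_mul_mem (ℓ : S → ℕ) (hp : ∀ i, (ℓ i).Prime) (M : ℕ)
    {x : ZMod (lev S ℓ)} (hx : IsUnit x) :
    ∀ z ∈ relModM S ℓ M, MonoidAlgebra.single x (1:ℤ) * z ∈ relModM S ℓ M := by
  intro z hz
  rw [relModM, AddSubgroup.mem_sup] at hz
  obtain ⟨y, hy, w, hw, rfl⟩ := hz
  rw [mul_add]
  refine AddSubgroup.add_mem _
    (AddSubgroup.mem_sup_left (single_unit_mul_mem_rel S ℓ hp hx y hy)) ?_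
  obtain ⟨v, rfl⟩ := AddMonoidHom.mem_range.mp hw
  refine AddSubgroup.mem_sup_right ⟨MonoidAlgebra.single x 1 * v, ?_⟩
  show (M:ℤ) • (MonoidAlgebra.single x (1:ℤ) * v)
    = MonoidAlgebra.single x (1:ℤ) * ((M:ℤ) • v)
  rw [mul_smul_comm]

theorem mulok (ℓ : S → ℕ) (hp : ∀ i, (ℓ i).Prime) (M : ℕ)
    (σ : S → (ZMod (lev S ℓ))ˣ) (T' : Finset S) :
    ∀ z ∈ relModM S ℓ M,
      (∏ i ∈ T', ∑ k ∈ Finset.range (ℓ i - 1),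
          MonoidAlgebra.single ((σ i : ZMod (lev S ℓ)) ^ k) (k : ℤ)) * z ∈ relModM S ℓ M := by
  refine Finset.prod_induction _ (fun w => ∀ z ∈ relModM S ℓ M, w * z ∈ relModM S ℓ M)
    ?_ ?_ ?_
  · intro a b ha hb z hz; rw [mul_assoc]; exact ha _ (hb _ hz)
  · intro z hz; rw [one_mul]; exact hz
  · intro i _
    refine Finset.sum_induction _ (fun w => ∀ z ∈ relModM S ℓ M, w * z ∈ relModM S ℓ M)
      ?_ ?_ ?_
    · intro a b ha hb z hz; rw [add_mul]; exact AddSubgroup.add_mem _ (ha _ hz) (hb _ hz)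
    · intro z hz; rw [zero_mul]; exact zero_mem _
    · intro k _ z hz
      have h1 : MonoidAlgebra.single ((σ i : ZMod (lev S ℓ)) ^ k) ((k:ℕ):ℤ)
          = ((k:ℕ):ℤ) • MonoidAlgebra.single ((σ i : ZMod (lev S ℓ)) ^ k) (1:ℤ) := by
        rw [MonoidAlgebra.smul_single, smul_eq_mul, mul_one]
      rw [h1, smul_mul_assoc]
      refine AddSubgroup.zsmul_mem _ ?_ _
      have hu : IsUnit ((σ i : ZMod (lev S ℓ)) ^ k) := by
        rw [← Units.val_pow_eq_pow_val]; exact (σ i ^ k).isUnit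
      exact single_unit_mul_mem S ℓ hp M hu z hz

/-! ### Inertia generators and Frobenius -/

theorem order_map (ℓ : S → ℕ) (hp : ∀ i, (ℓ i).Prime) (hinj : Function.Injective ℓ)
    (σ : S → (ZMod (lev S ℓ))ˣ)
    (hσ1 : ∀ (i : S) (h : lev S ℓ / ℓ i ∣ lev S ℓ),
      ZMod.castHom h (ZMod (lev S ℓ / ℓ i)) (σ i : ZMod (lev S ℓ)) = 1)
    (hσord : ∀ i, orderOf (σ i) = ℓ i - 1) (j : S) :
    orderOf (Units.map (ZMod.castHom (dvd_lev S ℓ j) (ZMod (ℓ j))).toMonoidHom (σ j))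
      = ℓ j - 1 := by
  set w := Units.map (ZMod.castHom (dvd_lev S ℓ j) (ZMod (ℓ j))).toMonoidHom (σ j) with hw
  refine Nat.dvd_antisymm ?_ ?_
  · rw [← hσord j]; exact orderOf_map_dvd _ _
  · rw [← hσord j]
    apply orderOf_dvd_of_pow_eq_one
    have hw1 : w ^ orderOf w = 1 := pow_orderOf_eq_one w
    apply Units.ext
    rw [Units.val_pow_eq_pow_val, Units.val_one]
    refine eq_one_of_two_casts S ℓ hp hinj j ?_ ?_
    · have := congrArg Units.val hw1
      rw [Units.val_pow_eq_pow_val, Units.val_one] at this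
      rw [map_pow]
      simpa [hw] using this
    · rw [map_pow, hσ1 j _, one_pow]

theorem exists_prod (ℓ : S → ℕ) (hp : ∀ i, (ℓ i).Prime) (hinj : Function.Injective ℓ)
    (σ : S → (ZMod (lev S ℓ))ˣ)
    (hσ1 : ∀ (i : S) (h : lev S ℓ / ℓ i ∣ lev S ℓ),
      ZMod.castHom h (ZMod (lev S ℓ / ℓ i)) (σ i : ZMod (lev S ℓ)) = 1)
    (hσord : ∀ i, orderOf (σ i) = ℓ i - 1) (u : (ZMod (lev S ℓ))ˣ) :
    ∃ k : S → ℤ, u = ∏ i, σ i ^ (k i) := by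
  haveI : NeZero (lev S ℓ) := ⟨(lev_pos S ℓ hp).ne'⟩
  have hψσ : ∀ i j : S, i ≠ j →
      Units.map (ZMod.castHom (dvd_lev S ℓ i) (ZMod (ℓ i))).toMonoidHom (σ j) = 1 := by
    intro i j hij
    apply Units.ext
    rw [Units.coe_map, Units.val_one]
    show ZMod.castHom (dvd_lev S ℓ i) (ZMod (ℓ i)) (σ j : ZMod (lev S ℓ)) = 1
    have hcomp := ZMod.castHom_comp (dvd_div S ℓ hp hij)
      (Nat.div_dvd_of_dvd (dvd_lev S ℓ j))
    have := congrArg (fun f => f ((σ j : ZMod (lev S ℓ)))) hcomp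
    simp only [RingHom.comp_apply] at this
    rw [← this, hσ1 j _, map_one]
  have hgen : ∀ i : S, ∃ k : ℤ,
      (Units.map (ZMod.castHom (dvd_lev S ℓ i) (ZMod (ℓ i))).toMonoidHom (σ i)) ^ k
        = Units.map (ZMod.castHom (dvd_lev S ℓ i) (ZMod (ℓ i))).toMonoidHom u := by
    intro i
    haveI : NeZero (ℓ i) := ⟨(hp i).pos.ne'⟩
    set w := Units.map (ZMod.castHom (dvd_lev S ℓ i) (ZMod (ℓ i))).toMonoidHom (σ i)
    have htop : Subgroup.zpowers w = ⊤ := by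
      apply Subgroup.eq_top_of_card_eq
      rw [Nat.card_zpowers, order_map S ℓ hp hinj σ hσ1 hσord i,
        Nat.card_eq_fintype_card, ZMod.card_units_eq_totient, Nat.totient_prime (hp i)]
    have : Units.map (ZMod.castHom (dvd_lev S ℓ i) (ZMod (ℓ i))).toMonoidHom u
        ∈ Subgroup.zpowers w := by rw [htop]; trivial
    exact Subgroup.mem_zpowers_iff.mp this
  choose k hk using hgen
  refine ⟨k, ?_⟩
  have hv : ∀ i : S, Units.map (ZMod.castHom (dvd_lev S ℓ i) (ZMod (ℓ i))).toMonoidHom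
      (u * (∏ j, σ j ^ (k j))⁻¹) = 1 := by
    intro i
    rw [map_mul, map_inv, map_prod]
    have hprod : ∏ j, Units.map (ZMod.castHom (dvd_lev S ℓ i) (ZMod (ℓ i))).toMonoidHom
        (σ j ^ (k j))
        = Units.map (ZMod.castHom (dvd_lev S ℓ i) (ZMod (ℓ i))).toMonoidHom (σ i) ^ (k i) := by
      have e1 : ∀ j ∈ Finset.univ, j ≠ i →
          Units.map (ZMod.castHom (dvd_lev S ℓ i) (ZMod (ℓ i))).toMonoidHom (σ j ^ (k j)) = 1 := by
        intro j _ hji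
        rw [map_zpow, hψσ i j (Ne.symm hji), one_zpow]
      rw [Finset.prod_eq_single i e1 (fun hi => absurd (Finset.mem_univ i) hi), map_zpow]
    rw [hprod, hk i]
    simp
  have hval : ((u * (∏ j, σ j ^ (k j))⁻¹ : (ZMod (lev S ℓ))ˣ) : ZMod (lev S ℓ)) = 1 := by
    apply eq_one_of_all_casts S ℓ hp hinj
    intro i
    have := congrArg Units.val (hv i)
    rwa [Units.coe_map, Units.val_one] at this
  have huv : u * (∏ j, σ j ^ (k j))⁻¹ = 1 := Units.ext (by rw [hval, Units.val_one])
  exact mul_inv_eq_one.mp huv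

theorem exists_unit_frob (ℓ : S → ℕ) (hp : ∀ i, (ℓ i).Prime) (hinj : Function.Injective ℓ)
    (j : S) :
    ∃ v : (ZMod (lev S ℓ))ˣ, ∀ T' : Finset S, j ∉ T' →
      ((ℓ j : ℕ) : ZMod (lev S ℓ)) * (∑ i ∈ T', ((lev S ℓ / ℓ i : ℕ) : ZMod (lev S ℓ)))
        = (v : ZMod (lev S ℓ)) * (∑ i ∈ T', ((lev S ℓ / ℓ i : ℕ) : ZMod (lev S ℓ))) := by
  haveI : NeZero (lev S ℓ) := ⟨(lev_pos S ℓ hp).ne'⟩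
  haveI : NeZero (lev S ℓ / ℓ j) := ⟨(div_pos S ℓ hp j).ne'⟩
  obtain ⟨N, hN1, hN2⟩ := Nat.chineseRemainder (coprime_div S ℓ hp hinj j) 1 (ℓ j)
  have hc1 : Nat.Coprime N (ℓ j) :=
    coprime_of_modEq hN1 (Nat.coprime_one_left _)
  have hc2 : Nat.Coprime N (lev S ℓ / ℓ j) :=
    coprime_of_modEq hN2 (coprime_div S ℓ hp hinj j)
  have hcop : Nat.Coprime N (lev S ℓ) := by
    have := Nat.Coprime.mul_right hc1 hc2
    rwa [Nat.mul_div_cancel' (dvd_lev S ℓ j)] at this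
  refine ⟨ZMod.unitOfCoprime N hcop, ?_⟩
  intro T' hjT'
  have hcast : ZMod.castHom (Nat.div_dvd_of_dvd (dvd_lev S ℓ j)) (ZMod (lev S ℓ / ℓ j))
        ((ℓ j : ℕ) : ZMod (lev S ℓ))
      = ZMod.castHom (Nat.div_dvd_of_dvd (dvd_lev S ℓ j)) (ZMod (lev S ℓ / ℓ j))
        ((ZMod.unitOfCoprime N hcop : (ZMod (lev S ℓ))ˣ) : ZMod (lev S ℓ)) := by
    rw [ZMod.coe_unitOfCoprime, map_natCast, map_natCast]
    exact ((ZMod.natCast_eq_natCast_iff _ _ _).mpr hN2).symm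
  have hann : ((lev S ℓ / ℓ j : ℕ) : ZMod (lev S ℓ))
      * (∑ i ∈ T', ((lev S ℓ / ℓ i : ℕ) : ZMod (lev S ℓ))) = 0 := by
    rw [Finset.mul_sum]
    refine Finset.sum_eq_zero fun i hi => ?_
    exact mI_mul_mI S ℓ hp (fun h => hjT' (h ▸ hi))
  exact mul_eq_of_cast_eq (Nat.div_dvd_of_dvd (dvd_lev S ℓ j)) hann hcast

theorem Nmul (ℓ : S → ℕ) (hp : ∀ i, (ℓ i).Prime) (hinj : Function.Injective ℓ)
    (σ : S → (ZMod (lev S ℓ))ˣ)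
    (hσ1 : ∀ (i : S) (h : lev S ℓ / ℓ i ∣ lev S ℓ),
      ZMod.castHom h (ZMod (lev S ℓ / ℓ i)) (σ i : ZMod (lev S ℓ)) = 1)
    (hσord : ∀ i, orderOf (σ i) = ℓ i - 1) {j : S} {T' : Finset S} (hj : j ∉ T') :
    (∑ k ∈ Finset.range (ℓ j - 1),
        MonoidAlgebra.single ((σ j : ZMod (lev S ℓ)) ^ k) (1:ℤ)) *
      MonoidAlgebra.single ((∑ i ∈ T', ((lev S ℓ / ℓ i : ℕ) : ZMod (lev S ℓ)))
        + ((lev S ℓ / ℓ j : ℕ) : ZMod (lev S ℓ))) 1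
    = (∑ c ∈ Finset.range (ℓ j),
        MonoidAlgebra.single ((∑ i ∈ T', ((lev S ℓ / ℓ i : ℕ) : ZMod (lev S ℓ)))
          + (c : ZMod (lev S ℓ)) * ((lev S ℓ / ℓ j : ℕ) : ZMod (lev S ℓ))) 1)
      - MonoidAlgebra.single (∑ i ∈ T', ((lev S ℓ / ℓ i : ℕ) : ZMod (lev S ℓ))) 1 := by
  haveI : NeZero (lev S ℓ) := ⟨(lev_pos S ℓ hp).ne'⟩
  haveI : NeZero (ℓ j) := ⟨(hp j).pos.ne'⟩
  haveI : Fact (ℓ j).Prime := ⟨hp j⟩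
  set a' : ZMod (lev S ℓ) := ∑ i ∈ T', ((lev S ℓ / ℓ i : ℕ) : ZMod (lev S ℓ)) with ha'
  set m : ZMod (lev S ℓ) := ((lev S ℓ / ℓ j : ℕ) : ZMod (lev S ℓ)) with hm
  set g : ZMod (lev S ℓ) := (σ j : ZMod (lev S ℓ)) with hg
  set w := Units.map (ZMod.castHom (dvd_lev S ℓ j) (ZMod (ℓ j))).toMonoidHom (σ j) with hw
  set n := ℓ j - 1 with hn
  let G : ZMod (ℓ j) → AMod S ℓ := fun d =>
    MonoidAlgebra.single (a' + ((d.val : ℕ) : ZMod (lev S ℓ)) * m) (1:ℤ)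
  have hann : ∀ k : ℕ, g ^ k * a' = a' := by
    intro k
    rw [ha', Finset.mul_sum]
    refine Finset.sum_congr rfl fun i hi => ?_
    refine cast_one_mul_mI S ℓ hp ?_ (fun hij => hj (by rwa [hij] at hi))
    rw [map_pow, hσ1 j _, one_pow]
  have hterm : ∀ k : ℕ, g ^ k * (a' + m)
      = a' + (((w ^ k : (ZMod (ℓ j))ˣ) : ZMod (ℓ j)).val : ZMod (lev S ℓ)) * m := by
    intro k
    rw [mul_add, hann k, hm, mul_mI_val S ℓ hp j (g ^ k)]
    congr 3
    rw [map_pow]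
    rw [Units.val_pow_eq_pow_val, hw, Units.coe_map]
    rfl
  have hord : orderOf w = n := order_map S ℓ hp hinj σ hσ1 hσord j
  have hinjOn : ∀ k1 ∈ Finset.range n, ∀ k2 ∈ Finset.range n,
      ((w ^ k1 : (ZMod (ℓ j))ˣ) : ZMod (ℓ j)) = ((w ^ k2 : (ZMod (ℓ j))ˣ) : ZMod (ℓ j)) →
        k1 = k2 := by
    intro k1 h1 k2 h2 he
    have := Units.ext he
    exact pow_injOn_Iio_orderOf (by rw [hord]; exact Finset.mem_range.mp h1)
      (by rw [hord]; exact Finset.mem_range.mp h2) this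
  have himg : (Finset.range n).image (fun k => ((w ^ k : (ZMod (ℓ j))ˣ) : ZMod (ℓ j)))
      = Finset.univ.erase 0 := by
    refine Finset.eq_of_subset_of_card_le ?_ ?_
    · intro d hd
      obtain ⟨k, _, rfl⟩ := Finset.mem_image.mp hd
      exact Finset.mem_erase.mpr ⟨Units.ne_zero _, Finset.mem_univ _⟩
    · rw [Finset.card_image_of_injOn (fun k1 h1 k2 h2 he => hinjOn k1 h1 k2 h2 he),
        Finset.card_erase_of_mem (Finset.mem_univ 0), Finset.card_range, Finset.card_univ, ZMod.card]
  calc (∑ k ∈ Finset.range n, MonoidAlgebra.single (g ^ k) (1:ℤ))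
        * MonoidAlgebra.single (a' + m) 1
      = ∑ k ∈ Finset.range n, G ((w ^ k : (ZMod (ℓ j))ˣ) : ZMod (ℓ j)) := by
        rw [Finset.sum_mul]
        refine Finset.sum_congr rfl fun k _ => ?_
        rw [MonoidAlgebra.single_mul_single, one_mul, hterm k]
    _ = ∑ d ∈ (Finset.range n).image
          (fun k => ((w ^ k : (ZMod (ℓ j))ˣ) : ZMod (ℓ j))), G d :=
        (Finset.sum_image hinjOn).symm
    _ = ∑ d ∈ Finset.univ.erase 0, G d := by rw [himg]
    _ = (∑ d : ZMod (ℓ j), G d) - G 0 :=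
        eq_sub_of_add_eq (Finset.sum_erase_add Finset.univ G (Finset.mem_univ 0))
    _ = (∑ c ∈ Finset.range (ℓ j),
          MonoidAlgebra.single (a' + (c : ZMod (lev S ℓ)) * m) 1) - G 0 := by
        rw [← sum_range_cast (f := G)]
        congr 1
        refine Finset.sum_congr rfl fun c hc => ?_
        show MonoidAlgebra.single
            (a' + ((((c : ℕ) : ZMod (ℓ j)).val : ℕ) : ZMod (lev S ℓ)) * m) (1:ℤ) = _
        rw [ZMod.val_cast_of_lt (Finset.mem_range.mp hc)]
    _ = (∑ c ∈ Finset.range (ℓ j),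
          MonoidAlgebra.single (a' + (c : ZMod (lev S ℓ)) * m) 1)
        - MonoidAlgebra.single a' 1 := by
        have : G 0 = MonoidAlgebra.single a' 1 := by
          show MonoidAlgebra.single (a' + (((0 : ZMod (ℓ j)).val : ℕ) : ZMod (lev S ℓ)) * m) (1:ℤ) = _
          rw [ZMod.val_zero]
          norm_num
        rw [this]

end Stmt14Aux

/-- With `{ℓ_i}` distinct odd primes, `r = ∏ ℓ_i`,
`G_S = Gal(ℚ(μ_r)/ℚ) ≅ (ℤ/rℤ)ˣ`, `σ_i` a generator of the inertia subgroup at `ℓ_i`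
(i.e. `σ_i ≡ 1 (mod r/ℓ_i)` of order `ℓ_i - 1`), and `M ∣ ℓ_i - 1` for all `i`:
for every `T ⊆ S` the element `D_T·[∑_{i ∈ T} 1/ℓ_i]` of `U_r/MU_r` is fixed by the
whole Galois group `(ℤ/rℤ)ˣ`, i.e. it lies in `H^0(G_S, U_r/MU_r)`. -/
theorem DT_elt_is_invariant (ℓ : S → ℕ)
    (hp : ∀ i, (ℓ i).Prime) (hodd : ∀ i, Odd (ℓ i)) (hinj : Function.Injective ℓ)
    (M : ℕ) (hM : 0 < M) (hMd : ∀ i, M ∣ ℓ i - 1)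
    (σ : S → (ZMod (lev S ℓ))ˣ)
    (hσ1 : ∀ (i : S) (h : lev S ℓ / ℓ i ∣ lev S ℓ),
      ZMod.castHom h (ZMod (lev S ℓ / ℓ i)) (σ i : ZMod (lev S ℓ)) = 1)
    (hσord : ∀ i, orderOf (σ i) = ℓ i - 1)
    (T : Finset S) (u : (ZMod (lev S ℓ))ˣ) :
    QuotientAddGroup.mk' (relModM S ℓ M)
        (MonoidAlgebra.single ((u : ZMod (lev S ℓ))) 1 * DTelt S ℓ σ T) =
      QuotientAddGroup.mk' (relModM S ℓ M) (DTelt S ℓ σ T) := by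
  haveI : NeZero (lev S ℓ) := ⟨(Stmt14Aux.lev_pos S ℓ hp).ne'⟩
  suffices H : ∀ T : Finset S, ∀ v : (ZMod (lev S ℓ))ˣ,
      MonoidAlgebra.single ((v : ZMod (lev S ℓ))) (1:ℤ) * DTelt S ℓ σ T - DTelt S ℓ σ T
        ∈ relModM S ℓ M by
    rw [QuotientAddGroup.mk'_apply, QuotientAddGroup.mk'_apply,
      QuotientAddGroup.eq_iff_sub_mem]
    exact H T u
  intro T
  induction T using Finset.strongInduction with
  | _ T IH =>
    have Hσ : ∀ j : S,
        MonoidAlgebra.single ((σ j : ZMod (lev S ℓ))) (1:ℤ) * DTelt S ℓ σ T - DTelt S ℓ σ T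
          ∈ relModM S ℓ M := by
      intro j
      by_cases hjT : j ∈ T
      · -- j ∈ T : the hard case
        obtain ⟨uj, huj⟩ := Stmt14Aux.exists_unit_frob S ℓ hp hinj j
        have hjT' : j ∉ T.erase j := fun h => (Finset.mem_erase.mp h).1 rfl
        obtain ⟨q, hq⟩ := hMd j
        have hgpow : (σ j : ZMod (lev S ℓ)) ^ (ℓ j - 1) = 1 := by
          rw [← Units.val_pow_eq_pow_val, ← hσord j, pow_orderOf_eq_one, Units.val_one]
        have hkey := Stmt14Aux.key_identity (g := ((σ j : ZMod (lev S ℓ)))) hgpow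
        have hNmul := Stmt14Aux.Nmul S ℓ hp hinj σ hσ1 hσord hjT'
        have hDT : DTelt S ℓ σ T = (∑ k ∈ Finset.range (ℓ j - 1), MonoidAlgebra.single (((σ j : ZMod (lev S ℓ))) ^ k) (k : ℤ)) * ((∏ i ∈ T.erase j, ∑ k ∈ Finset.range (ℓ i - 1), MonoidAlgebra.single (((σ i : ZMod (lev S ℓ))) ^ k) (k : ℤ)) *
            MonoidAlgebra.single ((∑ i ∈ T.erase j, ((lev S ℓ / ℓ i : ℕ) : ZMod (lev S ℓ))) + ((lev S ℓ / ℓ j : ℕ) : ZMod (lev S ℓ))) 1) := by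
          rw [DTelt, ← Finset.mul_prod_erase T _ hjT, ← Finset.sum_erase_add T _ hjT,
            mul_assoc]
        rw [hDT]
        have hdiff : MonoidAlgebra.single ((σ j : ZMod (lev S ℓ))) (1:ℤ) * ((∑ k ∈ Finset.range (ℓ j - 1), MonoidAlgebra.single (((σ j : ZMod (lev S ℓ))) ^ k) (k : ℤ)) * ((∏ i ∈ T.erase j, ∑ k ∈ Finset.range (ℓ i - 1), MonoidAlgebra.single (((σ i : ZMod (lev S ℓ))) ^ k) (k : ℤ)) * MonoidAlgebra.single ((∑ i ∈ T.erase j, ((lev S ℓ / ℓ i : ℕ) : ZMod (lev S ℓ))) + ((lev S ℓ / ℓ j : ℕ) : ZMod (lev S ℓ))) 1))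
              - (∑ k ∈ Finset.range (ℓ j - 1), MonoidAlgebra.single (((σ j : ZMod (lev S ℓ))) ^ k) (k : ℤ)) * ((∏ i ∈ T.erase j, ∑ k ∈ Finset.range (ℓ i - 1), MonoidAlgebra.single (((σ i : ZMod (lev S ℓ))) ^ k) (k : ℤ)) * MonoidAlgebra.single ((∑ i ∈ T.erase j, ((lev S ℓ / ℓ i : ℕ) : ZMod (lev S ℓ))) + ((lev S ℓ / ℓ j : ℕ) : ZMod (lev S ℓ))) 1)
            = ((MonoidAlgebra.single ((σ j : ZMod (lev S ℓ))) (1:ℤ) - 1) * (∑ k ∈ Finset.range (ℓ j - 1), MonoidAlgebra.single (((σ j : ZMod (lev S ℓ))) ^ k) (k : ℤ))) * ((∏ i ∈ T.erase j, ∑ k ∈ Finset.range (ℓ i - 1), MonoidAlgebra.single (((σ i : ZMod (lev S ℓ))) ^ k) (k : ℤ)) * MonoidAlgebra.single ((∑ i ∈ T.erase j, ((lev S ℓ / ℓ i : ℕ) : ZMod (lev S ℓ))) + ((lev S ℓ / ℓ j : ℕ) : ZMod (lev S ℓ))) 1) := by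
          ring
        rw [hdiff, hkey]
        have eD : (DTelt S ℓ σ (T.erase j)) = (∏ i ∈ T.erase j, ∑ k ∈ Finset.range (ℓ i - 1), MonoidAlgebra.single (((σ i : ZMod (lev S ℓ))) ^ k) (k : ℤ)) * MonoidAlgebra.single (∑ i ∈ T.erase j, ((lev S ℓ / ℓ i : ℕ) : ZMod (lev S ℓ))) 1 := rfl
        have eN : (∑ k ∈ Finset.range (ℓ j - 1), MonoidAlgebra.single (((σ j : ZMod (lev S ℓ))) ^ k) (1:ℤ)) * ((∏ i ∈ T.erase j, ∑ k ∈ Finset.range (ℓ i - 1), MonoidAlgebra.single (((σ i : ZMod (lev S ℓ))) ^ k) (k : ℤ)) * MonoidAlgebra.single ((∑ i ∈ T.erase j, ((lev S ℓ / ℓ i : ℕ) : ZMod (lev S ℓ))) + ((lev S ℓ / ℓ j : ℕ) : ZMod (lev S ℓ))) 1) = (∏ i ∈ T.erase j, ∑ k ∈ Finset.range (ℓ i - 1), MonoidAlgebra.single (((σ i : ZMod (lev S ℓ))) ^ k) (k : ℤ)) * ((∑ c ∈ Finset.range (ℓ j), MonoidAlgebra.single ((∑ i ∈ T.erase j, ((lev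 S ℓ / ℓ i : ℕ) : ZMod (lev S ℓ))) + (c : ZMod (lev S ℓ)) * ((lev S ℓ / ℓ j : ℕ) : ZMod (lev S ℓ))) 1) - MonoidAlgebra.single (∑ i ∈ T.erase j, ((lev S ℓ / ℓ i : ℕ) : ZMod (lev S ℓ))) 1) := by
          rw [show (∑ k ∈ Finset.range (ℓ j - 1), MonoidAlgebra.single (((σ j : ZMod (lev S ℓ))) ^ k) (1:ℤ)) * ((∏ i ∈ T.erase j, ∑ k ∈ Finset.range (ℓ i - 1), MonoidAlgebra.single (((σ i : ZMod (lev S ℓ))) ^ k) (k : ℤ)) * MonoidAlgebra.single ((∑ i ∈ T.erase j, ((lev S ℓ / ℓ i : ℕ) : ZMod (lev S ℓ))) + ((lev S ℓ / ℓ j : ℕ) : ZMod (lev S ℓ))) 1) = (∏ i ∈ T.erase j, ∑ k ∈ Finset.range (ℓ i - 1), MonoidAlgebra.single (((σ i : ZMod (lev S ℓ))) ^ k) (k : ℤ)) * ((∑ k ∈ Finset.range (ℓ j - 1), MonoidAlgebra.single (((σ j : ZMod (lev S ℓ))) ^ k) (1:ℤ)) * MonoidAlgebra.single ((∑ i ∈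 T.erase j, ((lev S ℓ / ℓ i : ℕ) : ZMod (lev S ℓ))) + ((lev S ℓ / ℓ j : ℕ) : ZMod (lev S ℓ))) 1) by ring,
            hNmul]
        have eF : MonoidAlgebra.single ((uj : ZMod (lev S ℓ))) (1:ℤ) * (DTelt S ℓ σ (T.erase j)) = (∏ i ∈ T.erase j, ∑ k ∈ Finset.range (ℓ i - 1), MonoidAlgebra.single (((σ i : ZMod (lev S ℓ))) ^ k) (k : ℤ)) * (MonoidAlgebra.single ((ℓ j : ZMod (lev S ℓ)) * (∑ i ∈ T.erase j, ((lev S ℓ / ℓ i : ℕ) : ZMod (lev S ℓ)))) 1) := by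
          show MonoidAlgebra.single ((uj : ZMod (lev S ℓ))) (1:ℤ)
            * ((∏ i ∈ T.erase j, ∑ k ∈ Finset.range (ℓ i - 1), MonoidAlgebra.single (((σ i : ZMod (lev S ℓ))) ^ k) (k : ℤ)) * MonoidAlgebra.single (∑ i ∈ T.erase j, ((lev S ℓ / ℓ i : ℕ) : ZMod (lev S ℓ))) 1) = _
          rw [mul_left_comm, MonoidAlgebra.single_mul_single, one_mul,
            ← huj (T.erase j) hjT']
        have hdecomp : (MonoidAlgebra.single ((1 : ZMod (lev S ℓ))) ((ℓ j - 1 : ℕ) : ℤ) - (∑ k ∈ Finset.range (ℓ j - 1), MonoidAlgebra.single (((σ j : ZMod (lev S ℓ))) ^ k) (1:ℤ))) * ((∏ i ∈ T.erase j, ∑ k ∈ Finset.range (ℓ i - 1), MonoidAlgebra.single (((σ i : ZMod (lev S ℓ))) ^ k) (k : ℤ)) * MonoidAlgebra.single ((∑ i ∈ T.erase j, ((lev S ℓ / ℓ i : ℕ) : ZMod (lev S ℓ))) + ((lev S ℓ / ℓ j : ℕ) : ZMod (lev S ℓ))) 1)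
            = MonoidAlgebra.single ((1 : ZMod (lev S ℓ))) ((ℓ j - 1 : ℕ) : ℤ) * ((∏ i ∈ T.erase j, ∑ k ∈ Finset.range (ℓ i - 1), MonoidAlgebra.single (((σ i : ZMod (lev S ℓ))) ^ k) (k : ℤ)) * MonoidAlgebra.single ((∑ i ∈ T.erase j, ((lev S ℓ / ℓ i : ℕ) : ZMod (lev S ℓ))) + ((lev S ℓ / ℓ j : ℕ) : ZMod (lev S ℓ))) 1)
              + (∏ i ∈ T.erase j, ∑ k ∈ Finset.range (ℓ i - 1), MonoidAlgebra.single (((σ i : ZMod (lev S ℓ))) ^ k) (k : ℤ)) * ((MonoidAlgebra.single ((ℓ j : ZMod (lev S ℓ)) * (∑ i ∈ T.erase j, ((lev S ℓ / ℓ i : ℕ) : ZMod (lev S ℓ)))) 1) - (∑ c ∈ Finset.range (ℓ j), MonoidAlgebra.single ((∑ i ∈ T.erase j, ((lev S ℓ / ℓ i : ℕ) : ZMod (lev S ℓ))) + (c : ZMod (lev S ℓ)) * ((lev S ℓ / ℓ j : ℕ) : ZMod (lev S ℓ))) 1))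
              - (MonoidAlgebra.single ((uj : ZMod (lev S ℓ))) (1:ℤ) * (DTelt S ℓ σ (T.erase j)) - (DTelt S ℓ σ (T.erase j))) := by
          rw [sub_mul, eN, eF, eD]
          ring
        rw [hdecomp]
        refine AddSubgroup.sub_mem _ (AddSubgroup.add_mem _ ?part1 ?part2) ?part3
        case part1 =>
          have e0 : MonoidAlgebra.single ((1 : ZMod (lev S ℓ))) ((ℓ j - 1 : ℕ) : ℤ) * ((∏ i ∈ T.erase j, ∑ k ∈ Finset.range (ℓ i - 1), MonoidAlgebra.single (((σ i : ZMod (lev S ℓ))) ^ k) (k : ℤ)) * MonoidAlgebra.single ((∑ i ∈ T.erase j, ((lev S ℓ / ℓ i : ℕ) : ZMod (lev S ℓ))) + ((lev S ℓ / ℓ j : ℕ) : ZMod (lev S ℓ))) 1) = ((ℓ j - 1 : ℕ) : ℤ) • ((∏ i ∈ T.erase j, ∑ k ∈ Finset.range (ℓ i - 1), MonoidAlgebra.single (((σ i : ZMod (lev S ℓ))) ^ k) (k : ℤ)) * MonoidAlgebra.single ((∑ i ∈ T.erase j, ((lev S ℓ / ℓ i : ℕ) : ZMod (lev S ℓ)))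 + ((lev S ℓ / ℓ j : ℕ) : ZMod (lev S ℓ))) 1) := by
            calc MonoidAlgebra.single ((1 : ZMod (lev S ℓ))) ((ℓ j - 1 : ℕ) : ℤ) * ((∏ i ∈ T.erase j, ∑ k ∈ Finset.range (ℓ i - 1), MonoidAlgebra.single (((σ i : ZMod (lev S ℓ))) ^ k) (k : ℤ)) * MonoidAlgebra.single ((∑ i ∈ T.erase j, ((lev S ℓ / ℓ i : ℕ) : ZMod (lev S ℓ))) + ((lev S ℓ / ℓ j : ℕ) : ZMod (lev S ℓ))) 1)
                = (((ℓ j - 1 : ℕ) : ℤ) • MonoidAlgebra.single ((1 : ZMod (lev S ℓ))) (1:ℤ)) * ((∏ i ∈ T.erase j, ∑ k ∈ Finset.range (ℓ i - 1), MonoidAlgebra.single (((σ i : ZMod (lev S ℓ))) ^ k) (k : ℤ)) * MonoidAlgebra.single ((∑ i ∈ T.erase j, ((lev S ℓ / ℓ i : ℕ) : ZMod (lev S ℓ))) + ((lev S ℓ / ℓ j : ℕ) : ZMod (lev S ℓ))) 1) := by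
                  rw [MonoidAlgebra.smul_single, smul_eq_mul, mul_one]
              _ = ((ℓ j - 1 : ℕ) : ℤ) • (MonoidAlgebra.single ((1 : ZMod (lev S ℓ))) (1:ℤ) * ((∏ i ∈ T.erase j, ∑ k ∈ Finset.range (ℓ i - 1), MonoidAlgebra.single (((σ i : ZMod (lev S ℓ))) ^ k) (k : ℤ)) * MonoidAlgebra.single ((∑ i ∈ T.erase j, ((lev S ℓ / ℓ i : ℕ) : ZMod (lev S ℓ))) + ((lev S ℓ / ℓ j : ℕ) : ZMod (lev S ℓ))) 1)) :=
                  smul_mul_assoc _ _ _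
              _ = ((ℓ j - 1 : ℕ) : ℤ) • ((∏ i ∈ T.erase j, ∑ k ∈ Finset.range (ℓ i - 1), MonoidAlgebra.single (((σ i : ZMod (lev S ℓ))) ^ k) (k : ℤ)) * MonoidAlgebra.single ((∑ i ∈ T.erase j, ((lev S ℓ / ℓ i : ℕ) : ZMod (lev S ℓ))) + ((lev S ℓ / ℓ j : ℕ) : ZMod (lev S ℓ))) 1) := by rw [← MonoidAlgebra.one_def, one_mul]
          rw [e0, hq]
          rw [show (((M * q : ℕ)) : ℤ) = (M : ℤ) * (q : ℤ) by push_cast; ring, mul_smul]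
          exact AddSubgroup.mem_sup_right (AddMonoidHom.mem_range.mpr ⟨(q : ℤ) • ((∏ i ∈ T.erase j, ∑ k ∈ Finset.range (ℓ i - 1), MonoidAlgebra.single (((σ i : ZMod (lev S ℓ))) ^ k) (k : ℤ)) * MonoidAlgebra.single ((∑ i ∈ T.erase j, ((lev S ℓ / ℓ i : ℕ) : ZMod (lev S ℓ))) + ((lev S ℓ / ℓ j : ℕ) : ZMod (lev S ℓ))) 1), rfl⟩)
        case part2 =>
          refine Stmt14Aux.mulok S ℓ hp M σ (T.erase j) _ ?_
          exact AddSubgroup.mem_sup_left (AddSubgroup.subset_closure ⟨j, (∑ i ∈ T.erase j, ((lev S ℓ / ℓ i : ℕ) : ZMod (lev S ℓ))), rfl⟩)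
        case part3 =>
          exact IH (T.erase j) (Finset.erase_ssubset hjT) uj
      · -- j ∉ T : exact fixedness
        have hfix : (σ j : ZMod (lev S ℓ)) * (∑ i ∈ T, ((lev S ℓ / ℓ i : ℕ) : ZMod (lev S ℓ)))
            = ∑ i ∈ T, ((lev S ℓ / ℓ i : ℕ) : ZMod (lev S ℓ)) := by
          rw [Finset.mul_sum]
          refine Finset.sum_congr rfl fun i hi => ?_
          exact Stmt14Aux.cast_one_mul_mI S ℓ hp (hσ1 j _)
            (fun hij => hjT (by rwa [hij] at hi))
        have heq : MonoidAlgebra.single ((σ j : ZMod (lev S ℓ))) (1:ℤ) * DTelt S ℓ σ T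
            = DTelt S ℓ σ T := by
          rw [DTelt, mul_left_comm, MonoidAlgebra.single_mul_single, one_mul, hfix]
        rw [heq, sub_self]
        exact zero_mem _
    intro v
    obtain ⟨k, rfl⟩ := Stmt14Aux.exists_prod S ℓ hp hinj σ hσ1 hσord v
    let Hg : Subgroup (ZMod (lev S ℓ))ˣ :=
      { carrier := {v : (ZMod (lev S ℓ))ˣ |
          MonoidAlgebra.single ((v : ZMod (lev S ℓ))) (1:ℤ) * DTelt S ℓ σ T - DTelt S ℓ σ T
            ∈ relModM S ℓ M}
        one_mem' := by
          show MonoidAlgebra.single (((1 : (ZMod (lev S ℓ))ˣ) : ZMod (lev S ℓ))) (1:ℤ)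
              * DTelt S ℓ σ T - DTelt S ℓ σ T ∈ relModM S ℓ M
          rw [Units.val_one, ← MonoidAlgebra.one_def, one_mul, sub_self]
          exact zero_mem _
        mul_mem' := by
          intro a b ha hb
          show MonoidAlgebra.single (((a * b : (ZMod (lev S ℓ))ˣ) : ZMod (lev S ℓ))) (1:ℤ)
              * DTelt S ℓ σ T - DTelt S ℓ σ T ∈ relModM S ℓ M
          have hs : MonoidAlgebra.single ((a : ZMod (lev S ℓ))) (1:ℤ)
              * MonoidAlgebra.single ((b : ZMod (lev S ℓ))) (1:ℤ)
              = MonoidAlgebra.single ((a : ZMod (lev S ℓ)) * (b : ZMod (lev S ℓ))) (1:ℤ) := by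
            rw [MonoidAlgebra.single_mul_single, one_mul]
          have hkey : MonoidAlgebra.single (((a * b : (ZMod (lev S ℓ))ˣ) : ZMod (lev S ℓ))) (1:ℤ)
              * DTelt S ℓ σ T - DTelt S ℓ σ T
              = MonoidAlgebra.single ((a : ZMod (lev S ℓ))) (1:ℤ)
                  * (MonoidAlgebra.single ((b : ZMod (lev S ℓ))) (1:ℤ) * DTelt S ℓ σ T
                      - DTelt S ℓ σ T)
                + (MonoidAlgebra.single ((a : ZMod (lev S ℓ))) (1:ℤ) * DTelt S ℓ σ T
                    - DTelt S ℓ σ T) := by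
            rw [Units.val_mul, ← hs]
            ring
          rw [hkey]
          exact AddSubgroup.add_mem _
            (Stmt14Aux.single_unit_mul_mem S ℓ hp M a.isUnit _ hb) ha
        inv_mem' := by
          intro a ha
          show MonoidAlgebra.single (((a⁻¹ : (ZMod (lev S ℓ))ˣ) : ZMod (lev S ℓ))) (1:ℤ)
              * DTelt S ℓ σ T - DTelt S ℓ σ T ∈ relModM S ℓ M
          have hs : MonoidAlgebra.single ((a⁻¹ : (ZMod (lev S ℓ))ˣ) : ZMod (lev S ℓ)) (1:ℤ)
              * MonoidAlgebra.single ((a : ZMod (lev S ℓ))) (1:ℤ) = 1 := by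
            rw [MonoidAlgebra.single_mul_single, one_mul, Units.inv_mul]
            exact (MonoidAlgebra.one_def).symm
          have hkey : MonoidAlgebra.single (((a⁻¹ : (ZMod (lev S ℓ))ˣ) : ZMod (lev S ℓ))) (1:ℤ)
              * DTelt S ℓ σ T - DTelt S ℓ σ T
              = -(MonoidAlgebra.single ((a⁻¹ : (ZMod (lev S ℓ))ˣ) : ZMod (lev S ℓ)) (1:ℤ)
                  * (MonoidAlgebra.single ((a : ZMod (lev S ℓ))) (1:ℤ) * DTelt S ℓ σ T
                      - DTelt S ℓ σ T)) := by
            rw [mul_sub, ← mul_assoc, hs, one_mul]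
            ring
          rw [hkey]
          exact AddSubgroup.neg_mem _
            (Stmt14Aux.single_unit_mul_mem S ℓ hp M a⁻¹.isUnit _ ha)
      }
    have hmem : (∏ i, σ i ^ (k i)) ∈ Hg :=
      Subgroup.prod_mem Hg fun i _ => Subgroup.zpow_mem Hg (Hσ i) (k i)
    exact hmem
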